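/- Let α_1, α_2 ∈ [0, π/2] and take the parametrized observables A^{(1)}_x = cos α_1 σ_X + (−1)^x sin α_1 σ_Z and A^{(2)}_x = cos α_2 σ_A + (−1)^x sin α_2 σ_B. Then the maximal eigenvalue of W'_1 and the maximal eigenvalue of W'_2 are both equal to 2√(1 + sin 2α_1 · sin 2α_2), and the maximal eigenvalue of W'_3 equals 4 sin α_1. In particular, the maximal eigenvalues of W'_1 and W'_2 are at most 2√2, and that of W'_3 is at most 4. -/

import Mathlib

open Matrix ComplexOrder Kronecker

noncomputable section

/-- 2×2 complex matrices. -/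
abbrev Mat2 := Matrix (Fin 2) (Fin 2) ℂ

/-- 4×4 complex matrices (two qubits). -/
abbrev Mat4 := Matrix (Fin 2 × Fin 2) (Fin 2 × Fin 2) ℂ

/-- The Pauli matrix `σ_X`. -/
def σX : Mat2 := !![0, 1; 1, 0]

/-- The Pauli matrix `σ_Z`. -/
def σZ : Mat2 := !![1, 0; 0, -1]

/-- `σ_A = (σ_X + σ_Z)/√2`. -/
def σA : Mat2 := ((Real.sqrt 2 : ℂ))⁻¹ • (σX + σZ)

/-- `σ_B = (σ_X − σ_Z)/√2`. -/
def σB : Mat2 := ((Real.sqrt 2 : ℂ))⁻¹ • (σX - σZ)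

/-- The parametrized observables of the first sender. -/
def A1 (α : ℝ) : Fin 2 → Mat2 := fun x =>
  ((Real.cos α : ℝ) : ℂ) • σX + ((-1 : ℂ) ^ ((x : ℕ)) * ((Real.sin α : ℝ) : ℂ)) • σZ

/-- The parametrized observables of the second sender. -/
def A2 (α : ℝ) : Fin 2 → Mat2 := fun x =>
  ((Real.cos α : ℝ) : ℂ) • σA + ((-1 : ℂ) ^ ((x : ℕ)) * ((Real.sin α : ℝ) : ℂ)) • σB

/-- `W'_1`. -/
def W'1 (α₁ α₂ : ℝ) : Mat4 :=
  (A1 α₁ 0 + A1 α₁ 1) ⊗ₖ A2 α₂ 0 + (A1 α₁ 0 - A1 α₁ 1) ⊗ₖ A2 α₂ 1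

/-- `W'_2`. -/
def W'2 (α₁ α₂ : ℝ) : Mat4 :=
  (-(A1 α₁ 0 + A1 α₁ 1)) ⊗ₖ A2 α₂ 0 + (A1 α₁ 0 - A1 α₁ 1) ⊗ₖ A2 α₂ 1

/-- `W'_3`. -/
def W'3 (α₁ α₂ : ℝ) : Mat4 :=
  (-2 : ℂ) • ((A1 α₁ 0 - A1 α₁ 1) ⊗ₖ A2 α₂ 1)

/-- `c` is the maximal eigenvalue of the Hermitian matrix `W`: `W ≤ c·I` and `c` is
attained by some nonzero eigenvector. -/
def IsMaxEigenvalue (W : Mat4) (c : ℝ) : Prop :=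
  (((c : ℝ) : ℂ) • (1 : Mat4) - W).PosSemidef ∧
    ∃ v : Fin 2 × Fin 2 → ℂ, v ≠ 0 ∧ W.mulVec v = ((c : ℝ) : ℂ) • v

/-! ### Auxiliary matrices and scalars -/

def NN : Mat2 := !![0, -1; 1, 0]
def MM : Mat4 := NN ⊗ₖ NN

lemma hPyC (α : ℝ) : ((Real.cos α : ℂ))^2 + ((Real.sin α : ℂ))^2 = 1 := by
  exact_mod_cast Real.cos_sq_add_sin_sq α

lemma hrinv : (((Real.sqrt 2 : ℝ) : ℂ))⁻¹ * (((Real.sqrt 2 : ℝ) : ℂ))⁻¹ = 2⁻¹ := by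
  rw [← mul_inv]
  congr 1
  exact_mod_cast Real.mul_self_sqrt (by norm_num : (0:ℝ) ≤ 2)

lemma A2zero (α : ℝ) : A2 α 0 = (((Real.sqrt 2 : ℝ) : ℂ))⁻¹ •
    !![(Real.cos α : ℂ) - (Real.sin α : ℂ), (Real.cos α : ℂ) + (Real.sin α : ℂ);
       (Real.cos α : ℂ) + (Real.sin α : ℂ), -(Real.cos α : ℂ) + (Real.sin α : ℂ)] := by
  ext i j; fin_cases i <;> fin_cases j <;>
    simp [A2, σA, σB, σX, σZ] <;> ring

lemma A2one (α : ℝ) : A2 α 1 = (((Real.sqrt 2 : ℝ) : ℂ))⁻¹ •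
    !![(Real.cos α : ℂ) + (Real.sin α : ℂ), (Real.cos α : ℂ) - (Real.sin α : ℂ);
       (Real.cos α : ℂ) - (Real.sin α : ℂ), -(Real.cos α : ℂ) - (Real.sin α : ℂ)] := by
  ext i j; fin_cases i <;> fin_cases j <;>
    simp [A2, σA, σB, σX, σZ] <;> ring

lemma A1sum (α : ℝ) : A1 α 0 + A1 α 1 = ((2 * Real.cos α : ℝ) : ℂ) • σX := by
  simp [A1]
  module

lemma A1diff (α : ℝ) : A1 α 0 - A1 α 1 = ((2 * Real.sin α : ℝ) : ℂ) • σZ := by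
  simp [A1]
  module

lemma XX : σX * σX = 1 := by
  ext i j; fin_cases i <;> fin_cases j <;> simp [σX, mul_apply, Fin.sum_univ_two]

lemma ZZ : σZ * σZ = 1 := by
  ext i j; fin_cases i <;> fin_cases j <;> simp [σZ, mul_apply, Fin.sum_univ_two]

lemma XZ : σX * σZ = NN := by
  ext i j; fin_cases i <;> fin_cases j <;> simp [σX, σZ, NN, mul_apply, Fin.sum_univ_two]

lemma ZX : σZ * σX = (-1 : ℂ) • NN := by
  ext i j; fin_cases i <;> fin_cases j <;> simp [σX, σZ, NN, mul_apply, Fin.sum_univ_two]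

lemma NNsq : NN * NN = -1 := by
  ext i j; fin_cases i <;> fin_cases j <;> simp [NN, mul_apply, Fin.sum_univ_two]

lemma QQ (α : ℝ) : A2 α 0 * A2 α 0 = 1 := by
  rw [A2zero, Matrix.smul_mul, Matrix.mul_smul, smul_smul, hrinv,
    inv_smul_eq_iff₀ (by norm_num : (2:ℂ) ≠ 0)]
  ext i j; fin_cases i <;> fin_cases j <;>
    simp [mul_apply, Fin.sum_univ_two] <;>
    first
      | (ring1; done)
      | (linear_combination (2:ℂ) * hPyC α; done)
      | (linear_combination (-2:ℂ) * hPyC α; done)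
      | (linear_combination 2 * Complex.sin_sq_add_cos_sq (x := (α:ℂ)); done)
      | (linear_combination (-2) * Complex.sin_sq_add_cos_sq (x := (α:ℂ)); done)

lemma SS (α : ℝ) : A2 α 1 * A2 α 1 = 1 := by
  rw [A2one, Matrix.smul_mul, Matrix.mul_smul, smul_smul, hrinv,
    inv_smul_eq_iff₀ (by norm_num : (2:ℂ) ≠ 0)]
  ext i j; fin_cases i <;> fin_cases j <;>
    simp [mul_apply, Fin.sum_univ_two] <;>
    first
      | (ring1; done)
      | (linear_combination (2:ℂ) * hPyC α; done)
      | (linear_combination (-2:ℂ) * hPyC α; done)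
      | (linear_combination 2 * Complex.sin_sq_add_cos_sq (x := (α:ℂ)); done)
      | (linear_combination (-2) * Complex.sin_sq_add_cos_sq (x := (α:ℂ)); done)

lemma QS (α : ℝ) : A2 α 0 * A2 α 1 =
    (((Real.cos α)^2 - (Real.sin α)^2 : ℝ) : ℂ) • 1 + ((Real.sin (2*α) : ℝ) : ℂ) • NN := by
  rw [A2zero, A2one, Matrix.smul_mul, Matrix.mul_smul, smul_smul, hrinv,
    inv_smul_eq_iff₀ (by norm_num : (2:ℂ) ≠ 0), Real.sin_two_mul]
  ext i j; fin_cases i <;> fin_cases j <;>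
    simp [NN, mul_apply, Fin.sum_univ_two] <;>
    push_cast <;> ring

lemma SQ (α : ℝ) : A2 α 1 * A2 α 0 =
    (((Real.cos α)^2 - (Real.sin α)^2 : ℝ) : ℂ) • 1 + (-((Real.sin (2*α) : ℝ) : ℂ)) • NN := by
  rw [A2zero, A2one, Matrix.smul_mul, Matrix.mul_smul, smul_smul, hrinv,
    inv_smul_eq_iff₀ (by norm_num : (2:ℂ) ≠ 0), Real.sin_two_mul]
  ext i j; fin_cases i <;> fin_cases j <;>
    simp [NN, mul_apply, Fin.sum_univ_two] <;>
    push_cast <;> ring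

/-! ### Decompositions -/

lemma W1decomp (α₁ α₂ : ℝ) : W'1 α₁ α₂ =
    ((2 * Real.cos α₁ : ℝ) : ℂ) • (σX ⊗ₖ A2 α₂ 0) + ((2 * Real.sin α₁ : ℝ) : ℂ) • (σZ ⊗ₖ A2 α₂ 1) := by
  rw [W'1, A1sum, A1diff, smul_kronecker, smul_kronecker]

lemma W2decomp (α₁ α₂ : ℝ) : W'2 α₁ α₂ =
    (-((2 * Real.cos α₁ : ℝ) : ℂ)) • (σX ⊗ₖ A2 α₂ 0) + ((2 * Real.sin α₁ : ℝ) : ℂ) • (σZ ⊗ₖ A2 α₂ 1) := by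
  rw [W'2, A1sum, A1diff, smul_kronecker, ← neg_smul, smul_kronecker]

lemma W3decomp (α₁ α₂ : ℝ) : W'3 α₁ α₂ =
    (-((4 * Real.sin α₁ : ℝ) : ℂ)) • (σZ ⊗ₖ A2 α₂ 1) := by
  rw [W'3, A1diff, smul_kronecker, smul_smul]
  push_cast
  module

/-! ### Squares -/

lemma W1sq (α₁ α₂ : ℝ) : W'1 α₁ α₂ * W'1 α₁ α₂ =
    (4:ℂ) • 1 + ((4 * (Real.sin (2*α₁) * Real.sin (2*α₂)) : ℝ) : ℂ) • MM := by
  rw [W1decomp, Real.sin_two_mul α₁, MM]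
  simp only [Matrix.add_mul, Matrix.mul_add, Matrix.smul_mul, Matrix.mul_smul,
    ← mul_kronecker_mul, XX, ZZ, XZ, ZX, QQ, SS, QS α₂, SQ α₂,
    Matrix.kronecker_add, Matrix.kronecker_smul, smul_kronecker,
    Matrix.one_kronecker_one, smul_smul]
  match_scalars <;> push_cast <;>
    first
      | (ring1; done)
      | (linear_combination 4 * Complex.sin_sq_add_cos_sq (x := (α₁:ℂ)); done)
      | (linear_combination (8 * Complex.sin (α₁:ℂ) * Complex.cos (α₁:ℂ)) * Complex.sin_two_mul (α₂:ℂ); done)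
      | (linear_combination (-8 * Complex.sin (α₁:ℂ) * Complex.cos (α₁:ℂ)) * Complex.sin_two_mul (α₂:ℂ); done)

lemma W2sq (α₁ α₂ : ℝ) : W'2 α₁ α₂ * W'2 α₁ α₂ =
    (4:ℂ) • 1 - ((4 * (Real.sin (2*α₁) * Real.sin (2*α₂)) : ℝ) : ℂ) • MM := by
  rw [W2decomp, Real.sin_two_mul α₁, MM, sub_eq_add_neg, ← neg_smul]
  simp only [Matrix.add_mul, Matrix.mul_add, Matrix.smul_mul, Matrix.mul_smul,
    ← mul_kronecker_mul, XX, ZZ, XZ, ZX, QQ, SS, QS α₂, SQ α₂,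
    Matrix.kronecker_add, Matrix.kronecker_smul, smul_kronecker,
    Matrix.one_kronecker_one, smul_smul]
  match_scalars <;> push_cast <;>
    first
      | (ring1; done)
      | (linear_combination 4 * Complex.sin_sq_add_cos_sq (x := (α₁:ℂ)); done)
      | (linear_combination (8 * Complex.sin (α₁:ℂ) * Complex.cos (α₁:ℂ)) * Complex.sin_two_mul (α₂:ℂ); done)
      | (linear_combination (-8 * Complex.sin (α₁:ℂ) * Complex.cos (α₁:ℂ)) * Complex.sin_two_mul (α₂:ℂ); done)

lemma W3sq (α₁ α₂ : ℝ) : W'3 α₁ α₂ * W'3 α₁ α₂ =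
    (((4 * Real.sin α₁)^2 : ℝ) : ℂ) • 1 := by
  rw [W3decomp]
  simp only [Matrix.smul_mul, Matrix.mul_smul, ← mul_kronecker_mul, ZZ, SS,
    Matrix.one_kronecker_one, smul_smul]
  match_scalars
  push_cast
  ring

lemma MMsq : MM * MM = 1 := by
  rw [MM, ← mul_kronecker_mul, NNsq, show (-1 : Mat2) = (-1:ℂ) • 1 by simp,
    smul_kronecker, Matrix.kronecker_smul, Matrix.one_kronecker_one, smul_smul]
  norm_num

/-! ### Hermitian facts -/

lemma kronCT (A B : Mat2) : (A ⊗ₖ B)ᴴ = Aᴴ ⊗ₖ Bᴴ := by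
  ext p q
  simp [Matrix.conjTranspose_apply, Matrix.kroneckerMap_apply, star_mul']

lemma XH : σXᴴ = σX := by
  ext i j; fin_cases i <;> fin_cases j <;> simp [σX, Matrix.conjTranspose_apply]

lemma ZH : σZᴴ = σZ := by
  ext i j; fin_cases i <;> fin_cases j <;> simp [σZ, Matrix.conjTranspose_apply]

lemma QH (α : ℝ) : (A2 α 0)ᴴ = A2 α 0 := by
  rw [A2zero]
  ext i j; fin_cases i <;> fin_cases j <;>
    simp [Matrix.conjTranspose_apply, ← Complex.ofReal_cos, ← Complex.ofReal_sin, Complex.conj_ofReal, ← Complex.ofReal_inv]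

lemma SH (α : ℝ) : (A2 α 1)ᴴ = A2 α 1 := by
  rw [A2one]
  ext i j; fin_cases i <;> fin_cases j <;>
    simp [Matrix.conjTranspose_apply, ← Complex.ofReal_cos, ← Complex.ofReal_sin, Complex.conj_ofReal, ← Complex.ofReal_inv]

lemma NH : NNᴴ = (-1:ℂ) • NN := by
  ext i j; fin_cases i <;> fin_cases j <;> simp [NN, Matrix.conjTranspose_apply]

lemma MH : MMᴴ = MM := by
  rw [MM, kronCT, NH, smul_kronecker, Matrix.kronecker_smul, smul_smul]
  norm_num

lemma W1H (α₁ α₂ : ℝ) : (W'1 α₁ α₂)ᴴ = W'1 α₁ α₂ := by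
  rw [W1decomp]
  simp [Matrix.conjTranspose_add, Matrix.conjTranspose_smul, kronCT, XH, ZH, QH, SH,
    ← Complex.ofReal_cos, ← Complex.ofReal_sin, Complex.star_def, Complex.conj_ofReal]

lemma W2H (α₁ α₂ : ℝ) : (W'2 α₁ α₂)ᴴ = W'2 α₁ α₂ := by
  rw [W2decomp]
  simp [Matrix.conjTranspose_add, Matrix.conjTranspose_smul, kronCT, XH, ZH, QH, SH,
    ← Complex.ofReal_cos, ← Complex.ofReal_sin, Complex.star_def, Complex.conj_ofReal]

lemma W3H (α₁ α₂ : ℝ) : (W'3 α₁ α₂)ᴴ = W'3 α₁ α₂ := by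
  rw [W3decomp]
  simp [Matrix.conjTranspose_smul, kronCT, ZH, SH, ← Complex.ofReal_cos, ← Complex.ofReal_sin, Complex.star_def, Complex.conj_ofReal]

/-! ### PSD machinery -/

lemma psd_smul {A : Mat4} (hA : A.PosSemidef) {r : ℝ} (hr : 0 ≤ r) :
    (((r : ℝ) : ℂ) • A).PosSemidef := by
  constructor
  · show (((r:ℝ):ℂ) • A)ᴴ = _
    rw [Matrix.conjTranspose_smul, hA.1.eq]
    congr 1
    simp [Complex.star_def, Complex.conj_ofReal]
  · intro x
    have h0 : (0:ℂ) ≤ ((r:ℝ):ℂ) := by exact_mod_cast Complex.zero_le_real.mpr hr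
    exact (hA.smul h0).2 x

lemma engine {W C : Mat4} {t r : ℝ} (ht : 0 < t) (hr : 0 ≤ r) (hW : Wᴴ = W) (hC : Cᴴ = C)
    (hid : ((2*t : ℝ) : ℂ) • (((t : ℝ) : ℂ) • (1:Mat4) - W) =
      (((t : ℝ) : ℂ) • (1:Mat4) - W) * (((t : ℝ) : ℂ) • (1:Mat4) - W) + ((r : ℝ) : ℂ) • (C * C)) :
    (((t : ℝ) : ℂ) • (1:Mat4) - W).PosSemidef := by
  set B : Mat4 := ((t : ℝ) : ℂ) • (1:Mat4) - W with hBdef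
  have hB : Bᴴ = B := by
    rw [hBdef, Matrix.conjTranspose_sub, Matrix.conjTranspose_smul, hW,
      Matrix.conjTranspose_one]
    congr 2
    simp [Complex.star_def, Complex.conj_ofReal]
  have h1 : (B * B).PosSemidef := by
    have := Matrix.posSemidef_conjTranspose_mul_self B
    rwa [hB] at this
  have h2 : (C * C).PosSemidef := by
    have := Matrix.posSemidef_conjTranspose_mul_self C
    rwa [hC] at this
  have h3 : (((2*t : ℝ) : ℂ) • B).PosSemidef := by
    rw [hid]
    exact h1.add (psd_smul h2 hr)
  have h4 := psd_smul h3 (r := (2*t)⁻¹) (by positivity)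
  rwa [smul_smul, ← Complex.ofReal_mul, inv_mul_cancel₀ (by positivity), Complex.ofReal_one,
    one_smul] at h4

/-! ### Eigenvectors -/

/-- tensor product of two 2-vectors -/
def tv (x y : Fin 2 → ℂ) : Fin 2 × Fin 2 → ℂ := fun p => x p.1 * y p.2

lemma kron_mulVec (A B : Mat2) (x y : Fin 2 → ℂ) :
    (A ⊗ₖ B).mulVec (tv x y) = tv (A.mulVec x) (B.mulVec y) := by
  funext p
  simp [tv, Matrix.mulVec, dotProduct, Fintype.sum_prod_type, Fin.sum_univ_two,
    Matrix.kroneckerMap_apply]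
  ring

lemma tv_smul_left (c : ℂ) (x y : Fin 2 → ℂ) : tv (c • x) y = c • tv x y := by
  funext p; simp [tv]; ring

lemma tv_smul_right (c : ℂ) (x y : Fin 2 → ℂ) : tv x (c • y) = c • tv x y := by
  funext p; simp [tv]; ring

def xm : Fin 2 → ℂ := ![1, -Complex.I]
def xp : Fin 2 → ℂ := ![1, Complex.I]

def uu : Fin 2 × Fin 2 → ℂ := tv xm xp
def uu' : Fin 2 × Fin 2 → ℂ := tv xp xm
def vv : Fin 2 × Fin 2 → ℂ := tv xm xm
def vv' : Fin 2 × Fin 2 → ℂ := tv xp xp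

def u2 (α : ℝ) : ℝ := (Real.cos α - Real.sin α) / Real.sqrt 2
def v2 (α : ℝ) : ℝ := (Real.cos α + Real.sin α) / Real.sqrt 2
def wC (α : ℝ) : ℂ := (u2 α : ℂ) + (v2 α : ℂ) * Complex.I
def wC' (α : ℝ) : ℂ := (u2 α : ℂ) - (v2 α : ℂ) * Complex.I
def zC (α : ℝ) : ℂ := (v2 α : ℂ) + (u2 α : ℂ) * Complex.I
def zC' (α : ℝ) : ℂ := (v2 α : ℂ) - (u2 α : ℂ) * Complex.I

lemma sqrt2_ne : Real.sqrt 2 ≠ 0 := by positivity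

lemma hX1 : σX.mulVec xm = (-Complex.I) • xp := by
  funext i; fin_cases i <;>
    simp [σX, xm, xp, Matrix.mulVec, dotProduct, Fin.sum_univ_two, Complex.ext_iff]

lemma hX2 : σX.mulVec xp = Complex.I • xm := by
  funext i; fin_cases i <;>
    simp [σX, xm, xp, Matrix.mulVec, dotProduct, Fin.sum_univ_two, Complex.ext_iff]

lemma hZ1 : σZ.mulVec xm = xp := by
  funext i; fin_cases i <;>
    simp [σZ, xm, xp, Matrix.mulVec, dotProduct, Fin.sum_univ_two, Complex.ext_iff]

lemma hZ2 : σZ.mulVec xp = xm := by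
  funext i; fin_cases i <;>
    simp [σZ, xm, xp, Matrix.mulVec, dotProduct, Fin.sum_univ_two, Complex.ext_iff]

lemma hQ1 (α : ℝ) : (A2 α 0).mulVec xp = wC α • xm := by
  rw [A2zero]
  funext i; fin_cases i <;>
  · simp [xm, xp, wC, u2, v2, Matrix.mulVec, dotProduct, Fin.sum_univ_two,
      Complex.ext_iff, ← Complex.ofReal_inv]
    constructor <;> (field_simp; try ring)

lemma hQ2 (α : ℝ) : (A2 α 0).mulVec xm = wC' α • xp := by
  rw [A2zero]
  funext i; fin_cases i <;>
  · simp [xm, xp, wC', u2, v2, Matrix.mulVec, dotProduct, Fin.sum_univ_two,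
      Complex.ext_iff, ← Complex.ofReal_inv]
    constructor <;> (field_simp; try ring)

lemma hS1 (α : ℝ) : (A2 α 1).mulVec xp = zC α • xm := by
  rw [A2one]
  funext i; fin_cases i <;>
  · simp [xm, xp, zC, u2, v2, Matrix.mulVec, dotProduct, Fin.sum_univ_two,
      Complex.ext_iff, ← Complex.ofReal_inv]
    constructor <;> (field_simp; try ring)

lemma hS2 (α : ℝ) : (A2 α 1).mulVec xm = zC' α • xp := by
  rw [A2one]
  funext i; fin_cases i <;>
  · simp [xm, xp, zC', u2, v2, Matrix.mulVec, dotProduct, Fin.sum_univ_two,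
      Complex.ext_iff, ← Complex.ofReal_inv]
    constructor <;> (field_simp; try ring)

def aC (α₁ α₂ : ℝ) : ℂ :=
  2 * (Real.sin α₁ : ℂ) * zC α₂ - 2 * Complex.I * (Real.cos α₁ : ℂ) * wC α₂
def aC' (α₁ α₂ : ℝ) : ℂ :=
  2 * (Real.sin α₁ : ℂ) * zC' α₂ + 2 * Complex.I * (Real.cos α₁ : ℂ) * wC' α₂

lemma E1 (α₁ α₂ : ℝ) : (W'1 α₁ α₂).mulVec uu = aC α₁ α₂ • uu' := by
  rw [W1decomp, uu, uu']
  rw [Matrix.add_mulVec, Matrix.smul_mulVec, Matrix.smul_mulVec,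
    kron_mulVec, kron_mulVec, hX1, hQ1, hZ1, hS1, tv_smul_left, tv_smul_right,
    tv_smul_right, aC]
  match_scalars
  push_cast
  ring

lemma E2 (α₁ α₂ : ℝ) : (W'1 α₁ α₂).mulVec uu' = aC' α₁ α₂ • uu := by
  rw [W1decomp, uu, uu']
  rw [Matrix.add_mulVec, Matrix.smul_mulVec, Matrix.smul_mulVec,
    kron_mulVec, kron_mulVec, hX2, hQ2, hZ2, hS2, tv_smul_left, tv_smul_right,
    tv_smul_right, aC']
  match_scalars
  push_cast
  ring

lemma E3 (α₁ α₂ : ℝ) : (W'2 α₁ α₂).mulVec vv = aC' α₁ α₂ • vv' := by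
  rw [W2decomp, vv, vv']
  rw [Matrix.add_mulVec, Matrix.smul_mulVec, Matrix.smul_mulVec,
    kron_mulVec, kron_mulVec, hX1, hQ2, hZ1, hS2, tv_smul_left, tv_smul_right,
    tv_smul_right, aC']
  match_scalars
  push_cast
  ring

lemma E4 (α₁ α₂ : ℝ) : (W'2 α₁ α₂).mulVec vv' = aC α₁ α₂ • vv := by
  rw [W2decomp, vv, vv']
  rw [Matrix.add_mulVec, Matrix.smul_mulVec, Matrix.smul_mulVec,
    kron_mulVec, kron_mulVec, hX2, hQ1, hZ2, hS1, tv_smul_left, tv_smul_right,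
    tv_smul_right, aC]
  match_scalars
  push_cast
  ring

lemma h2C : ((Real.sqrt 2 : ℝ) : ℂ) * ((Real.sqrt 2 : ℝ) : ℂ) = 2 := by
  exact_mod_cast Real.mul_self_sqrt (by norm_num : (0:ℝ) ≤ 2)

lemma sq2 : Real.sqrt 2 ^ 2 = 2 := Real.sq_sqrt (by norm_num)

lemma u2v2_sq (α : ℝ) : u2 α ^ 2 + v2 α ^ 2 = 1 := by
  rw [u2, v2, div_pow, div_pow, sq2]
  linear_combination Real.sin_sq_add_cos_sq α

lemma v2u2_diff (α : ℝ) : v2 α ^ 2 - u2 α ^ 2 = 2 * Real.sin α * Real.cos α := by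
  rw [u2, v2, div_pow, div_pow, sq2]
  ring

lemma u2v2_sqC (α : ℝ) : ((u2 α : ℂ)) ^ 2 + ((v2 α : ℂ)) ^ 2 = 1 := by
  exact_mod_cast u2v2_sq α

lemma v2u2_diffC (α : ℝ) :
    ((v2 α : ℂ)) ^ 2 - ((u2 α : ℂ)) ^ 2 = 2 * Complex.sin (α:ℂ) * Complex.cos (α:ℂ) := by
  rw [← Complex.ofReal_sin, ← Complex.ofReal_cos]
  exact_mod_cast v2u2_diff α

lemma aCnorm (α₁ α₂ : ℝ) : aC α₁ α₂ * aC' α₁ α₂ =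
    ((4 + 4 * (Real.sin (2*α₁) * Real.sin (2*α₂)) : ℝ) : ℂ) := by
  rw [aC, aC', wC, wC', zC, zC', Real.sin_two_mul, Real.sin_two_mul]
  push_cast
  linear_combination (4 * Complex.sin (α₁:ℂ)^2 + 4 * Complex.cos (α₁:ℂ)^2) * u2v2_sqC α₂ +
    8 * Complex.sin (α₁:ℂ) * Complex.cos (α₁:ℂ) * v2u2_diffC α₂ +
    4 * Complex.sin_sq_add_cos_sq (x := (α₁:ℂ)) +
    (4 * Complex.cos (α₁:ℂ)^2 * ((u2 α₂:ℂ)^2 + (v2 α₂:ℂ)^2) -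
     8 * Complex.sin (α₁:ℂ) * Complex.cos (α₁:ℂ) * ((v2 α₂:ℂ)^2 - (u2 α₂:ℂ)^2) -
     4 * Complex.cos (α₁:ℂ)^2) * Complex.I_sq +
    (-4 * Complex.sin (α₁:ℂ)^2 * (u2 α₂:ℂ)^2 +
     4 * Complex.cos (α₁:ℂ)^2 * (v2 α₂:ℂ)^2 * (Complex.I^2 - 2) -
     8 * (u2 α₂:ℂ)^2 * Complex.cos (α₁:ℂ)^2 + 4 * Complex.cos (α₁:ℂ)^2) * Complex.I_sq

/-! eigenvector for W'3 -/

def phiv (α : ℝ) : Fin 2 → ℂ := ![1 + (v2 α : ℂ), (u2 α : ℂ)]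

lemma h2sqC : ((Real.sqrt 2 : ℝ) : ℂ) ^ 2 = 2 := by rw [sq]; exact h2C

lemma hSphi (α : ℝ) : (A2 α 1).mulVec (phiv α) = phiv α := by
  have hne : ((Real.sqrt 2 : ℝ) : ℂ) ≠ 0 := by exact_mod_cast sqrt2_ne
  rw [A2one, Matrix.smul_mulVec, inv_smul_eq_iff₀ hne]
  funext i; fin_cases i <;>
  · simp [phiv, u2, v2, Matrix.mulVec, dotProduct, Fin.sum_univ_two]
    push_cast
    field_simp
    first
      | (ring1; done)
      | (linear_combination 2 * Complex.sin_sq_add_cos_sq (x := (α:ℂ)) - h2sqC; done)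
      | (linear_combination (-2) * Complex.sin_sq_add_cos_sq (x := (α:ℂ)) + h2sqC; done)

def e1v : Fin 2 → ℂ := ![0, 1]

lemma hZe1 : σZ.mulVec e1v = (-1 : ℂ) • e1v := by
  funext i; fin_cases i <;>
    simp [σZ, e1v, Matrix.mulVec, dotProduct, Fin.sum_univ_two]

lemma E5 (α₁ α₂ : ℝ) : (W'3 α₁ α₂).mulVec (tv e1v (phiv α₂)) =
    ((4 * Real.sin α₁ : ℝ) : ℂ) • tv e1v (phiv α₂) := by
  rw [W3decomp, Matrix.smul_mulVec, kron_mulVec, hZe1, hSphi, tv_smul_left]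
  match_scalars
  push_cast
  ring

/-! ### Main theorem -/

/-- the maximal eigenvalues of `W'_1`, `W'_2` equal
`2√(1 + sin 2α₁ sin 2α₂) ≤ 2√2`, and that of `W'_3` equals `4 sin α₁ ≤ 4`. -/
theorem stmt17 (α₁ α₂ : ℝ)
    (h₁ : α₁ ∈ Set.Icc 0 (Real.pi / 2)) (h₂ : α₂ ∈ Set.Icc 0 (Real.pi / 2)) :
    IsMaxEigenvalue (W'1 α₁ α₂)
        (2 * Real.sqrt (1 + Real.sin (2 * α₁) * Real.sin (2 * α₂)))
    ∧ IsMaxEigenvalue (W'2 α₁ α₂)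
        (2 * Real.sqrt (1 + Real.sin (2 * α₁) * Real.sin (2 * α₂)))
    ∧ IsMaxEigenvalue (W'3 α₁ α₂) (4 * Real.sin α₁)
    ∧ 2 * Real.sqrt (1 + Real.sin (2 * α₁) * Real.sin (2 * α₂)) ≤ 2 * Real.sqrt 2
    ∧ 4 * Real.sin α₁ ≤ 4 := by
  obtain ⟨h1l, h1r⟩ := h₁
  obtain ⟨h2l, h2r⟩ := h₂
  have hpi := Real.pi_pos
  have hs1 : 0 ≤ Real.sin (2 * α₁) :=
    Real.sin_nonneg_of_nonneg_of_le_pi (by linarith) (by linarith)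
  have hs2 : 0 ≤ Real.sin (2 * α₂) :=
    Real.sin_nonneg_of_nonneg_of_le_pi (by linarith) (by linarith)
  have hp0 : 0 ≤ Real.sin (2 * α₁) * Real.sin (2 * α₂) := mul_nonneg hs1 hs2
  have hp1 : Real.sin (2 * α₁) * Real.sin (2 * α₂) ≤ 1 := by
    nlinarith [Real.sin_le_one (2 * α₁), Real.sin_le_one (2 * α₂)]
  set p : ℝ := Real.sin (2 * α₁) * Real.sin (2 * α₂) with hpdef
  set t : ℝ := 2 * Real.sqrt (1 + p) with htdef
  have h1p : (0:ℝ) ≤ 1 + p := by linarith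
  have hsq : Real.sqrt (1 + p) ^ 2 = 1 + p := Real.sq_sqrt h1p
  have hsp : 0 < Real.sqrt (1 + p) := Real.sqrt_pos.mpr (by linarith)
  have ht : 0 < t := by rw [htdef]; linarith
  have htt : t * t = 4 + 4 * p := by rw [htdef]; nlinarith [hsq]
  have httC : ((t : ℝ) : ℂ) * ((t : ℝ) : ℂ) = 4 + 4 * ((p : ℝ) : ℂ) := by
    have := congrArg (fun x : ℝ => (x : ℂ)) htt
    push_cast at this
    exact_mod_cast htt
  have hACt : aC α₁ α₂ * aC' α₁ α₂ = ((t : ℝ) : ℂ) * ((t : ℝ) : ℂ) := by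
    rw [aCnorm, httC]
    push_cast [hpdef]
    ring
  clear_value t p
  -- PSD identities
  have hC1 : ((1 : Mat4) - MM)ᴴ = (1 : Mat4) - MM := by
    rw [Matrix.conjTranspose_sub, Matrix.conjTranspose_one, MH]
  have hC2 : ((1 : Mat4) + MM)ᴴ = (1 : Mat4) + MM := by
    rw [Matrix.conjTranspose_add, Matrix.conjTranspose_one, MH]
  have hCsq1 : ((1 : Mat4) - MM) * ((1 : Mat4) - MM) = (2:ℂ) • 1 - (2:ℂ) • MM := by
    rw [Matrix.sub_mul, Matrix.mul_sub, Matrix.mul_sub, MMsq]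
    simp only [Matrix.one_mul, Matrix.mul_one]
    module
  have hCsq2 : ((1 : Mat4) + MM) * ((1 : Mat4) + MM) = (2:ℂ) • 1 + (2:ℂ) • MM := by
    rw [Matrix.add_mul, Matrix.mul_add, Matrix.mul_add, MMsq]
    simp only [Matrix.one_mul, Matrix.mul_one]
    module
  have hid1 : ((2 * t : ℝ) : ℂ) • (((t : ℝ) : ℂ) • (1:Mat4) - W'1 α₁ α₂) =
      (((t : ℝ) : ℂ) • (1:Mat4) - W'1 α₁ α₂) * (((t : ℝ) : ℂ) • (1:Mat4) - W'1 α₁ α₂) +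
        ((2 * p : ℝ) : ℂ) • (((1 : Mat4) - MM) * ((1 : Mat4) - MM)) := by
    rw [hCsq1]
    simp only [Matrix.sub_mul, Matrix.mul_sub, Matrix.smul_mul, Matrix.mul_smul,
      Matrix.one_mul, Matrix.mul_one, smul_smul, W1sq α₁ α₂, ← hpdef]
    match_scalars <;> push_cast <;>
      first
        | (ring1; done)
        | (linear_combination httC; done)
        | (linear_combination -httC; done)
  have hid2 : ((2 * t : ℝ) : ℂ) • (((t : ℝ) : ℂ) • (1:Mat4) - W'2 α₁ α₂) =
      (((t : ℝ) : ℂ) • (1:Mat4) - W'2 α₁ α₂) * (((t : ℝ) : ℂ) • (1:Mat4) - W'2 α₁ α₂) +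
        ((2 * p : ℝ) : ℂ) • (((1 : Mat4) + MM) * ((1 : Mat4) + MM)) := by
    rw [hCsq2]
    simp only [Matrix.sub_mul, Matrix.mul_sub, Matrix.smul_mul, Matrix.mul_smul,
      Matrix.one_mul, Matrix.mul_one, smul_smul, W2sq α₁ α₂, ← hpdef]
    match_scalars <;> push_cast <;>
      first
        | (ring1; done)
        | (linear_combination httC; done)
        | (linear_combination -httC; done)
  refine ⟨⟨?_, ?_⟩, ⟨?_, ?_⟩, ⟨?_, ?_⟩, ?_, ?_⟩
  · exact engine ht (by linarith) (W1H α₁ α₂) hC1 hid1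
  · -- eigenvector for W'1
    refine ⟨((t : ℝ) : ℂ) • uu + aC α₁ α₂ • uu', ?_, ?_⟩
    · intro h
      have h00 := congrFun h ((0 : Fin 2), (0 : Fin 2))
      have h01 := congrFun h ((0 : Fin 2), (1 : Fin 2))
      simp [uu, uu', tv, xm, xp] at h00 h01
      have htz : ((t : ℝ) : ℂ) = 0 := by
        linear_combination (1/2 : ℂ) * h00 - (Complex.I/2) * h01 +
          ((((t : ℝ) : ℂ) - aC α₁ α₂)/2) * Complex.I_sq
      rw [Complex.ofReal_eq_zero] at htz
      linarith
    · rw [Matrix.mulVec_add, Matrix.mulVec_smul, Matrix.mulVec_smul, E1, E2]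
      match_scalars <;>
        first
          | (ring1; done)
          | (linear_combination hACt; done)
          | (linear_combination -hACt; done)
  · exact engine ht (by linarith) (W2H α₁ α₂) hC2 hid2
  · -- eigenvector for W'2
    refine ⟨((t : ℝ) : ℂ) • vv + aC' α₁ α₂ • vv', ?_, ?_⟩
    · intro h
      have h00 := congrFun h ((0 : Fin 2), (0 : Fin 2))
      have h01 := congrFun h ((0 : Fin 2), (1 : Fin 2))
      simp [vv, vv', tv, xm, xp] at h00 h01
      have htz : ((t : ℝ) : ℂ) = 0 := by
        linear_combination (1/2 : ℂ) * h00 + (Complex.I/2) * h01 +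
          ((((t : ℝ) : ℂ) - aC' α₁ α₂)/2) * Complex.I_sq
      rw [Complex.ofReal_eq_zero] at htz
      linarith
    · rw [Matrix.mulVec_add, Matrix.mulVec_smul, Matrix.mulVec_smul, E3, E4]
      match_scalars <;>
        first
          | (ring1; done)
          | (linear_combination hACt; done)
          | (linear_combination -hACt; done)
  · -- PSD for W'3
    have hsin0 : 0 ≤ Real.sin α₁ := Real.sin_nonneg_of_nonneg_of_le_pi h1l (by linarith)
    rcases eq_or_lt_of_le hsin0 with hz | hpos
    · have hW30 : W'3 α₁ α₂ = 0 := by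
        rw [W'3, A1diff, ← hz]
        push_cast
        rw [show ((2:ℂ) * 0) = 0 by ring, zero_smul, Matrix.zero_kronecker, smul_zero]
      rw [hW30, ← hz]
      have : ((0 : Mat4)).PosSemidef := by
        simpa using Matrix.posSemidef_conjTranspose_mul_self (0 : Mat4)
      simpa using this
    · have ht3 : 0 < 4 * Real.sin α₁ := by linarith
      have hid3 : ((2 * (4 * Real.sin α₁) : ℝ) : ℂ) •
          (((4 * Real.sin α₁ : ℝ) : ℂ) • (1:Mat4) - W'3 α₁ α₂) =
          (((4 * Real.sin α₁ : ℝ) : ℂ) • (1:Mat4) - W'3 α₁ α₂) *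
            (((4 * Real.sin α₁ : ℝ) : ℂ) • (1:Mat4) - W'3 α₁ α₂) +
          ((0 : ℝ) : ℂ) • ((0 : Mat4) * (0 : Mat4)) := by
        simp only [Matrix.sub_mul, Matrix.mul_sub, Matrix.smul_mul, Matrix.mul_smul,
          Matrix.one_mul, Matrix.mul_one, smul_smul, W3sq α₁ α₂, Matrix.mul_zero,
          smul_zero, add_zero]
        match_scalars <;> push_cast <;> ring
      exact engine ht3 le_rfl (W3H α₁ α₂) Matrix.conjTranspose_zero hid3
  · -- eigenvector for W'3
    refine ⟨tv e1v (phiv α₂), ?_, E5 α₁ α₂⟩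
    intro h
    have h10 := congrFun h ((1 : Fin 2), (0 : Fin 2))
    have hv2 : 0 ≤ v2 α₂ := by
      rw [v2]
      have hc : 0 ≤ Real.cos α₂ := Real.cos_nonneg_of_mem_Icc ⟨by linarith, h2r⟩
      have hs : 0 ≤ Real.sin α₂ := Real.sin_nonneg_of_nonneg_of_le_pi h2l (by linarith)
      positivity
    simp [tv, e1v, phiv] at h10
    have : (1 : ℝ) + v2 α₂ = 0 := by exact_mod_cast h10
    linarith
  · -- bound 1
    have := Real.sqrt_le_sqrt (show 1 + p ≤ 2 by linarith)
    linarith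
  · nlinarith [Real.sin_le_one α₁]
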